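/- arXiv:1110.1280 — 2 statements merged into one kernel-verified Lean document; each statement's English description precedes it below -/
import Mathlib

section
/- Let H be an n×n real matrix and Λ a nonzero vector in ℝⁿ. Define the block matrix K = [[H, Λ],[Λᵀ, 0]] of size (n+1)×(n+1). Then K is invertible if and only if the following condition holds: for every r in ker(Λᵀ) (i.e., Λᵀr = 0), if sᵀHr = 0 for all s in ker(Λᵀ), then r = 0. -/
open Matrix

/-- The bordered (n+1)×(n+1) saddle-point matrix K = [[H, Λ],[Λᵀ, 0]]. -/
def borderedK {n : ℕ} (H : Matrix (Fin n) (Fin n) ℝ) (Λ : Fin n → ℝ) :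
    Matrix (Fin n ⊕ Fin 1) (Fin n ⊕ Fin 1) ℝ :=
  Matrix.fromBlocks H (Matrix.of fun i _ => Λ i) (Matrix.of fun _ j => Λ j) 0

theorem stmt_0 (n : ℕ) (H : Matrix (Fin n) (Fin n) ℝ) (Λ : Fin n → ℝ) (hΛ : Λ ≠ 0) :
    IsUnit (borderedK H Λ) ↔
      ∀ r : Fin n → ℝ, Λ ⬝ᵥ r = 0 →
        (∀ s : Fin n → ℝ, Λ ⬝ᵥ s = 0 → s ⬝ᵥ H.mulVec r = 0) → r = 0 := by
  have hΛΛ : Λ ⬝ᵥ Λ ≠ 0 := fun h => hΛ (dotProduct_self_eq_zero.1 h)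
  have hKmul : ∀ (x : Fin n → ℝ) (t : ℝ),
      (borderedK H Λ).mulVec (Sum.elim x fun _ => t) =
        Sum.elim (H.mulVec x + t • Λ) (fun _ => Λ ⬝ᵥ x) := by
    intro x t
    rw [borderedK, fromBlocks_mulVec]
    funext i
    cases i with
    | inl i => simp [mulVec, dotProduct, mul_comm]
    | inr j => simp [mulVec, dotProduct]
  constructor
  · intro hK r hr hall
    set v := H.mulVec r with hv
    set c := (v ⬝ᵥ Λ) / (Λ ⬝ᵥ Λ) with hc
    have hvc : v = c • Λ := by
      have hsΛ : Λ ⬝ᵥ (v - c • Λ) = 0 := by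
        rw [dotProduct_sub, dotProduct_smul]
        rw [hc, smul_eq_mul, div_mul_cancel₀ _ hΛΛ, dotProduct_comm v Λ, sub_self]
      have h1 : (v - c • Λ) ⬝ᵥ v = 0 := hall _ hsΛ
      have h2 : (v - c • Λ) ⬝ᵥ (c • Λ) = 0 := by
        rw [dotProduct_smul, dotProduct_comm, hsΛ, smul_zero]
      have h3 : (v - c • Λ) ⬝ᵥ (v - c • Λ) = 0 := by
        rw [dotProduct_sub, h1, h2, sub_zero]
      exact sub_eq_zero.1 (dotProduct_self_eq_zero.1 h3)
    have hu : (borderedK H Λ).mulVec (Sum.elim r fun _ => -c) = 0 := by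
      rw [hKmul]
      funext i
      cases i with
      | inl i =>
        have : H.mulVec r + (-c) • Λ = 0 := by rw [← hv, hvc]; funext j; simp
        simpa using congrFun this i
      | inr j => simpa using hr
    have hinj := mulVec_injective_iff_isUnit.2 hK
    have h0 : (Sum.elim r fun _ => -c) = (0 : Fin n ⊕ Fin 1 → ℝ) :=
      hinj (by rw [hu, mulVec_zero])
    funext i
    exact congrFun h0 (Sum.inl i)
  · intro hcond
    rw [← mulVec_injective_iff_isUnit]
    intro u w huw
    have key : ∀ u : Fin n ⊕ Fin 1 → ℝ, (borderedK H Λ).mulVec u = 0 → u = 0 := by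
      intro u hu
      have hudecomp : u = Sum.elim (u ∘ Sum.inl) (fun _ => u (Sum.inr 0)) := by
        funext i
        cases i with
        | inl i => rfl
        | inr j =>
          have : j = 0 := Subsingleton.elim j 0
          rw [this]; rfl
      rw [hudecomp, hKmul] at hu
      have htop : H.mulVec (u ∘ Sum.inl) + u (Sum.inr 0) • Λ = 0 := by
        funext i; exact congrFun hu (Sum.inl i)
      have hbot : Λ ⬝ᵥ (u ∘ Sum.inl) = 0 := congrFun hu (Sum.inr 0)
      have hx : u ∘ Sum.inl = 0 := by
        apply hcond _ hbot
        intro s hs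
        have hneg : H.mulVec (u ∘ Sum.inl) = -(u (Sum.inr 0) • Λ) := by
          rw [eq_neg_iff_add_eq_zero]; exact htop
        rw [hneg, dotProduct_neg, dotProduct_smul, dotProduct_comm, hs, smul_zero, neg_zero]
      have ht : u (Sum.inr 0) = 0 := by
        rw [hx, mulVec_zero, zero_add] at htop
        by_contra h
        exact hΛ ((smul_eq_zero.1 htop).resolve_left h)
      rw [hudecomp, hx, ht]
      funext i
      cases i <;> simp
    have : (borderedK H Λ).mulVec (u - w) = 0 := by
      rw [mulVec_sub, huw, sub_self]
    have := key _ this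
    exact sub_eq_zero.1 this
end

section
/- Let H be a symmetric positive semidefinite n×n real matrix and Λ a nonzero vector in ℝⁿ. Then the bordered matrix K = [[H, Λ],[Λᵀ, 0]] is invertible if and only if ker(H) ∩ ker(Λᵀ) = {0}. -/
open Matrix

theorem stmt_2 (n : ℕ) (H : Matrix (Fin n) (Fin n) ℝ) (Λ : Fin n → ℝ) (hΛ : Λ ≠ 0)
    (hsym : H.transpose = H) (hpsd : ∀ v : Fin n → ℝ, 0 ≤ v ⬝ᵥ H.mulVec v) :
    IsUnit (borderedK H Λ) ↔
      ∀ v : Fin n → ℝ, H.mulVec v = 0 → Λ ⬝ᵥ v = 0 → v = 0 := by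
  have hps : H.PosSemidef := by
    refine Matrix.PosSemidef.of_dotProduct_mulVec_nonneg ?_ fun x => by simpa using hpsd x
    simpa [Matrix.IsHermitian, Matrix.conjTranspose_eq_transpose_of_trivial] using hsym
  rw [Matrix.isUnit_iff_isUnit_det, isUnit_iff_ne_zero]
  constructor
  · intro hdet v hHv hΛv
    by_contra hv
    apply hdet
    rw [← Matrix.exists_mulVec_eq_zero_iff]
    refine ⟨Sum.elim v 0, ?_, ?_⟩
    · intro h
      apply hv
      funext i
      exact congrFun h (Sum.inl i)
    · rw [borderedK, Matrix.fromBlocks_mulVec]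
      funext x
      cases x with
      | inl i => simp [hHv, Matrix.mulVec, dotProduct]
      | inr j =>
        simpa [Matrix.mulVec, dotProduct] using hΛv
  · intro hker hdet
    obtain ⟨w, hw, hmul⟩ := (Matrix.exists_mulVec_eq_zero_iff).2 hdet
    set v : Fin n → ℝ := w ∘ Sum.inl with hv
    set t : ℝ := w (Sum.inr 0) with ht
    have hwelim : w = Sum.elim v (fun _ => t) := by
      funext x
      cases x with
      | inl i => rfl
      | inr j => simp [ht, Subsingleton.elim j 0]
    rw [hwelim, borderedK, Matrix.fromBlocks_mulVec] at hmul
    have h1 : H *ᵥ v + t • Λ = 0 := by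
      funext i
      have := congrFun hmul (Sum.inl i)
      simpa [Matrix.mulVec, dotProduct, mul_comm] using this
    have h2 : Λ ⬝ᵥ v = 0 := by
      have := congrFun hmul (Sum.inr 0)
      simpa [Matrix.mulVec, dotProduct] using this
    have hdotzero : v ⬝ᵥ H *ᵥ v = 0 := by
      have hHvv : H *ᵥ v = -(t • Λ) := by
        rw [eq_neg_iff_add_eq_zero]; exact h1
      rw [hHvv]
      simp [dotProduct_smul, dotProduct_comm v Λ, h2]
    have hHv : H *ᵥ v = 0 := by
      have := (hps.dotProduct_mulVec_zero_iff v).1 (by simpa using hdotzero)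
      exact this
    have htz : t = 0 := by
      rw [hHv, zero_add] at h1
      rcases smul_eq_zero.1 h1 with h | h
      · exact h
      · exact absurd h hΛ
    have hvz : v = 0 := hker v hHv h2
    apply hw
    rw [hwelim, hvz, htz]
    funext x; cases x <;> simp
end
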